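/- Let T be a finite tree on n vertices with adjacency matrix A, and for each k let m_k(T) denote the number of matchings of T with exactly k edges. Then the characteristic polynomial of A equals its matching polynomial: det(tI − A) = ∑_{k=0}^{⌊n/2⌋} (−1)^k m_k(T) t^{n−2k}. -/

import Mathlib

open scoped Matrix

section MatchingAux

open Equiv Function

set_option linter.unusedSectionVars false

variable {V : Type*} [Fintype V] [DecidableEq V]



lemma perm_sq_eq_one_of_acyclic {T : SimpleGraph V} (hA : T.IsAcyclic) (σ : Equiv.Perm V)
    (hadj : ∀ i, σ i ≠ i → T.Adj (σ i) i) : ∀ v, σ (σ v) = v := by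
  intro v
  by_contra hvv
  have hv : σ v ≠ v := fun h => hvv (by rw [h, h])
  set f : V → V := ⇑σ with hf
  have hfiter : ∀ n, f^[n] = ⇑(σ ^ n) := fun n => (Equiv.Perm.iterate_eq_pow σ n).symm ▸ rfl
  have hper : Function.IsPeriodicPt f (orderOf σ) v := by
    show f^[orderOf σ] v = v
    rw [hfiter, pow_orderOf_eq_one]; rfl
  set ℓ := Function.minimalPeriod f v with hℓ
  have hℓpos : 0 < ℓ := hper.minimalPeriod_pos (orderOf_pos σ)
  have hit : f^[ℓ] v = v := Function.iterate_minimalPeriod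
  have hinj : Set.InjOn (f^[·] v) (Set.Iio ℓ) := Function.iterate_injOn_Iio_minimalPeriod
  have hℓ1 : ℓ ≠ 1 := by intro h; rw [h] at hit; exact hv hit
  have hℓ2 : ℓ ≠ 2 := by intro h; rw [h] at hit; exact hvv hit
  have hℓ3 : 3 ≤ ℓ := by omega
  have nonfix : ∀ a, f (f^[a] v) ≠ f^[a] v := by
    intro a h
    have h1 : f^[a] (f v) = f^[a] v := by
      rw [← Function.iterate_succ_apply, Function.iterate_succ_apply']; exact h
    exact hv (σ.injective.iterate a h1)
  have hcons : ∀ {α : Type _} (g : ℕ → α) (a : ℕ), List.map g (List.range (a+1)).reverse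
      = g a :: List.map g (List.range a).reverse := by
    intro α g a
    rw [List.range_succ, List.reverse_append]
    simp
  have W : ∀ a : ℕ, ∃ w : T.Walk (f^[a] v) v,
      w.support = ((List.range (a+1)).reverse).map (fun b => f^[b] v) ∧
      w.edges = ((List.range a).reverse).map (fun b => s(f^[b+1] v, f^[b] v)) := by
    intro a
    induction a with
    | zero => exact ⟨SimpleGraph.Walk.nil, by simp, by simp⟩
    | succ a ih =>
      obtain ⟨w, hs, he⟩ := ih
      have hstep : f^[a+1] v = f (f^[a] v) := Function.iterate_succ_apply' f a v
      have hadj' : T.Adj (f^[a+1] v) (f^[a] v) := by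
        have := hadj (f^[a] v) (nonfix a)
        rwa [← hstep] at this
      refine ⟨SimpleGraph.Walk.cons hadj' w, ?_, ?_⟩
      · rw [SimpleGraph.Walk.support_cons, hs, hcons (fun b => f^[b] v) (a+1)]
      · rw [SimpleGraph.Walk.edges_cons, he, hcons (fun b => s(f^[b+1] v, f^[b] v)) a]
  obtain ⟨w, hs, he⟩ := W (ℓ - 1)
  have hfull : f^[ℓ-1+1] v = v := by rw [Nat.sub_add_cancel (by omega)]; exact hit
  have hclose : T.Adj v (f^[ℓ-1] v) := by
    have hne : f (f^[ℓ-1] v) ≠ f^[ℓ-1] v := nonfix _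
    have h2 := hadj (f^[ℓ-1] v) hne
    have h3 : f (f^[ℓ-1] v) = v := by
      have := Function.iterate_succ_apply' f (ℓ-1) v
      rw [hfull] at this; exact this.symm
    rwa [h3] at h2
  have hpath : w.IsPath := by
    refine SimpleGraph.Walk.IsPath.mk' ?_
    rw [hs]
    refine List.Nodup.map_on ?_ (by simp [List.nodup_range])
    intro x hx y hy hxy
    simp only [List.mem_reverse, List.mem_range] at hx hy
    exact hinj (by simp; omega) (by simp; omega) hxy
  have hedge : s(v, f^[ℓ-1] v) ∉ w.edges := by
    rw [he]
    intro hmem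
    simp only [List.mem_map, List.mem_reverse, List.mem_range] at hmem
    obtain ⟨b, hb, heq⟩ := hmem
    rw [Sym2.eq_iff] at heq
    rcases heq with ⟨h1, h2⟩ | ⟨h1, h2⟩
    · have := hinj (show b ∈ Set.Iio ℓ by simp; omega) (show ℓ-1 ∈ Set.Iio ℓ by simp; omega) h2
      omega
    · have hb0 : b = 0 := by
        have := hinj (show b ∈ Set.Iio ℓ by simp; omega) (show 0 ∈ Set.Iio ℓ by simp; omega)
          (by simpa using h2)
        exact this
      subst hb0
      have := hinj (show 1 ∈ Set.Iio ℓ by simp; omega) (show ℓ-1 ∈ Set.Iio ℓ by simp; omega) h1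
      omega
  exact hA (SimpleGraph.Walk.cons hclose w)
    ((SimpleGraph.Walk.cons_isCycle_iff w hclose).mpr ⟨hpath, hedge⟩)



def IsMatching' (T : SimpleGraph V) (s : Finset (Sym2 V)) : Prop :=
  ↑s ⊆ T.edgeSet ∧ (↑s : Set (Sym2 V)).Pairwise fun e f => ∀ v : V, v ∈ e → v ∉ f

lemma IsMatching'.uniq {T : SimpleGraph V} {s : Finset (Sym2 V)} (hs : IsMatching' T s)
    {e e' : Sym2 V} (he : e ∈ s) (he' : e' ∈ s) {v : V} (hv : v ∈ e) (hv' : v ∈ e') :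
    e = e' := by
  by_contra h
  exact hs.2 he he' h v hv hv'

open Classical in
noncomputable def matchFun (s : Finset (Sym2 V)) (v : V) : V :=
  if h : ∃ e ∈ s, v ∈ e then Sym2.Mem.other' h.choose_spec.2 else v

lemma matchFun_spec {T : SimpleGraph V} {s : Finset (Sym2 V)} (hs : IsMatching' T s)
    {e : Sym2 V} (he : e ∈ s) {v : V} (hv : v ∈ e) : s(v, matchFun s v) = e := by
  classical
  have h : ∃ e ∈ s, v ∈ e := ⟨e, he, hv⟩
  rw [matchFun, dif_pos h, Sym2.other_spec']
  exact hs.uniq h.choose_spec.1 he h.choose_spec.2 hv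

lemma matchFun_eq_self {s : Finset (Sym2 V)} {v : V} (h : ∀ e ∈ s, v ∉ e) :
    matchFun s v = v := by
  rw [matchFun, dif_neg]
  push_neg
  exact h

lemma matchFun_ne {T : SimpleGraph V} {s : Finset (Sym2 V)} (hs : IsMatching' T s)
    {e : Sym2 V} (he : e ∈ s) {v : V} (hv : v ∈ e) : matchFun s v ≠ v := by
  intro h
  have h1 := matchFun_spec hs he hv
  rw [h] at h1
  have : ¬e.IsDiag := T.not_isDiag_of_mem_edgeSet (hs.1 he)
  rw [← h1] at this
  exact this (Sym2.mk_isDiag_iff.mpr rfl)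

lemma matchFun_mem {T : SimpleGraph V} {s : Finset (Sym2 V)} (hs : IsMatching' T s)
    {e : Sym2 V} (he : e ∈ s) {v : V} (hv : v ∈ e) : matchFun s v ∈ e := by
  rw [← matchFun_spec hs he hv]
  exact Sym2.mem_mk_right _ _

lemma matchFun_invol {T : SimpleGraph V} {s : Finset (Sym2 V)} (hs : IsMatching' T s) :
    Function.Involutive (matchFun s) := by
  intro v
  by_cases h : ∃ e ∈ s, v ∈ e
  · obtain ⟨e, he, hv⟩ := h
    have h1 : s(v, matchFun s v) = e := matchFun_spec hs he hv
    have h2 : matchFun s v ∈ e := matchFun_mem hs he hv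
    have h3 : s(matchFun s v, matchFun s (matchFun s v)) = e := matchFun_spec hs he h2
    rw [← h1, Sym2.eq_iff] at h3
    rcases h3 with ⟨ha, hb⟩ | ⟨ha, hb⟩
    · rw [hb, ha]
    · exact hb
  · push_neg at h
    rw [matchFun_eq_self h, matchFun_eq_self h]

open Classical in
noncomputable def matchPerm (T : SimpleGraph V) (s : Finset (Sym2 V)) : Equiv.Perm V :=
  if h : IsMatching' T s then (matchFun_invol h).toPerm else 1

lemma matchPerm_apply {T : SimpleGraph V} {s : Finset (Sym2 V)} (hs : IsMatching' T s)
    (v : V) : matchPerm T s v = matchFun s v := by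
  classical
  rw [matchPerm]
  rw [dif_pos hs]
  rfl

def Mof (σ : Equiv.Perm V) : Finset (Sym2 V) := σ.support.image (fun v => s(v, σ v))

lemma edge_eq_of_mem {σ : Equiv.Perm V} (hinv : ∀ v, σ (σ v) = v) {u v : V}
    (h : v ∈ s(u, σ u)) : s(u, σ u) = s(v, σ v) := by
  rw [Sym2.mem_iff] at h
  rcases h with rfl | rfl
  · rfl
  · rw [hinv u, Sym2.eq_swap]

lemma mem_support_of_mem_edge {σ : Equiv.Perm V} (hinv : ∀ v, σ (σ v) = v) {u v : V}
    (hu : u ∈ σ.support) (h : v ∈ s(u, σ u)) : v ∈ σ.support := by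
  rw [Sym2.mem_iff] at h
  rcases h with rfl | rfl
  · exact hu
  · rw [Equiv.Perm.mem_support] at hu ⊢
    rw [hinv u]
    exact fun hc => hu hc.symm

lemma Mof_isMatching {T : SimpleGraph V} {σ : Equiv.Perm V}
    (hadj : ∀ i, σ i ≠ i → T.Adj (σ i) i) (hinv : ∀ v, σ (σ v) = v) :
    IsMatching' T (Mof σ) := by
  constructor
  · intro e he
    simp only [Mof, Finset.coe_image, Set.mem_image, Finset.mem_coe] at he
    obtain ⟨v, hv, rfl⟩ := he
    rw [Equiv.Perm.mem_support] at hv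
    exact (T.mem_edgeSet).mpr ((hadj v hv).symm)
  · intro e he f hf hne v hve hvf
    simp only [Mof, Finset.coe_image, Set.mem_image, Finset.mem_coe] at he hf
    obtain ⟨u, _, rfl⟩ := he
    obtain ⟨w, _, rfl⟩ := hf
    exact hne ((edge_eq_of_mem hinv hve).trans (edge_eq_of_mem hinv hvf).symm)

lemma card_support_eq {σ : Equiv.Perm V} (hinv : ∀ v, σ (σ v) = v) :
    σ.support.card = 2 * (Mof σ).card := by
  rw [Finset.card_eq_sum_card_image (fun v => s(v, σ v)) σ.support]
  rw [show (Mof σ).card = ∑ _e ∈ Mof σ, 1 from by simp, Finset.mul_sum]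
  refine Finset.sum_congr rfl ?_
  intro e he
  simp only [Mof, Finset.mem_image] at he
  obtain ⟨u, hu, rfl⟩ := he
  have hu' : σ u ≠ u := Equiv.Perm.mem_support.mp hu
  have : σ.support.filter (fun v => s(v, σ v) = s(u, σ u)) = {u, σ u} := by
    ext v
    simp only [Finset.mem_filter, Finset.mem_insert, Finset.mem_singleton]
    constructor
    · rintro ⟨hv, heq⟩
      have : v ∈ s(u, σ u) := by rw [← heq]; exact Sym2.mem_mk_left _ _
      rw [Sym2.mem_iff] at this
      tauto
    · rintro (rfl | rfl)
      · exact ⟨hu, rfl⟩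
      · refine ⟨mem_support_of_mem_edge hinv hu (Sym2.mem_mk_right _ _), ?_⟩
        exact (edge_eq_of_mem hinv (Sym2.mem_mk_right _ _)).symm
  rw [this, Finset.card_insert_of_notMem (by simpa using fun h => hu' h.symm),
    Finset.card_singleton]
  norm_num

lemma Mof_matchPerm {T : SimpleGraph V} {s : Finset (Sym2 V)} (hs : IsMatching' T s) :
    Mof (matchPerm T s) = s := by
  ext e
  simp only [Mof, Finset.mem_image]
  constructor
  · rintro ⟨v, hv, rfl⟩
    rw [Equiv.Perm.mem_support, matchPerm_apply hs] at hv
    have h : ∃ e ∈ s, v ∈ e := by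
      by_contra hc
      push_neg at hc
      exact hv (matchFun_eq_self hc)
    obtain ⟨e', he', hve'⟩ := h
    rw [matchPerm_apply hs, matchFun_spec hs he' hve']
    exact he'
  · intro he
    induction e with
    | _ a b =>
      refine ⟨a, ?_, ?_⟩
      · rw [Equiv.Perm.mem_support, matchPerm_apply hs]
        exact matchFun_ne hs he (Sym2.mem_mk_left a b)
      · rw [matchPerm_apply hs, matchFun_spec hs he (Sym2.mem_mk_left a b)]

lemma matchPerm_Mof {T : SimpleGraph V} {σ : Equiv.Perm V}
    (hadj : ∀ i, σ i ≠ i → T.Adj (σ i) i) (hinv : ∀ v, σ (σ v) = v) :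
    matchPerm T (Mof σ) = σ := by
  have hm := Mof_isMatching hadj hinv
  ext v
  rw [matchPerm_apply hm]
  by_cases hv : v ∈ σ.support
  · have he : s(v, σ v) ∈ Mof σ := Finset.mem_image_of_mem _ hv
    have := matchFun_spec hm he (Sym2.mem_mk_left _ _)
    exact Sym2.congr_right.mp this
  · have hfix : σ v = v := Equiv.Perm.notMem_support.mp hv
    rw [hfix]
    refine matchFun_eq_self ?_
    intro e he hve
    simp only [Mof, Finset.mem_image] at he
    obtain ⟨u, hu, rfl⟩ := he
    exact hv (mem_support_of_mem_edge hinv hu hve)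

lemma matchPerm_adj {T : SimpleGraph V} {s : Finset (Sym2 V)} (hs : IsMatching' T s) :
    ∀ i, matchPerm T s i ≠ i → T.Adj (matchPerm T s i) i := by
  intro v hv
  rw [matchPerm_apply hs] at hv ⊢
  have h : ∃ e ∈ s, v ∈ e := by
    by_contra hc
    push_neg at hc
    exact hv (matchFun_eq_self hc)
  obtain ⟨e, he, hve⟩ := h
  have := matchFun_spec hs he hve
  have hedge : s(v, matchFun s v) ∈ T.edgeSet := this ▸ hs.1 he
  exact (T.mem_edgeSet.mp hedge).symm

lemma sign_invol {σ : Equiv.Perm V} (hinv : ∀ v, σ (σ v) = v) :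
    Equiv.Perm.sign σ = (-1) ^ ((Mof σ).card) ∧
      σ.cycleType = Multiset.replicate ((Mof σ).card) 2 := by
  have hsq : σ * σ = 1 := by ext v; exact hinv v
  have hord : orderOf σ ∣ 2 := orderOf_dvd_of_pow_eq_one (by rw [pow_two]; exact hsq)
  have hall : ∀ n ∈ σ.cycleType, n = 2 := by
    intro n hn
    have h2 : 2 ≤ n := Equiv.Perm.two_le_of_mem_cycleType hn
    have hdvd : n ∣ 2 := dvd_trans (Multiset.dvd_lcm hn) ((Equiv.Perm.lcm_cycleType σ) ▸ hord)
    exact Nat.le_antisymm (Nat.le_of_dvd (by norm_num) hdvd) h2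
  have hrep : σ.cycleType = Multiset.replicate (Multiset.card σ.cycleType) 2 :=
    Multiset.eq_replicate.mpr ⟨rfl, hall⟩
  have hsum : σ.cycleType.sum = 2 * Multiset.card σ.cycleType := by
    conv_lhs => rw [hrep]
    rw [Multiset.sum_replicate, smul_eq_mul, mul_comm]
  have hcard : Multiset.card σ.cycleType = (Mof σ).card := by
    have h1 := Equiv.Perm.sum_cycleType σ
    have h2 := card_support_eq hinv
    omega
  constructor
  · rw [Equiv.Perm.sign_of_cycleType, hsum, hcard]
    rw [pow_add, pow_mul]
    norm_num
  · rw [hrep, hcard]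

end MatchingAux

/-- For a tree `T` on `n` vertices, the characteristic polynomial of its
adjacency matrix equals its matching polynomial:
`det(tI − A) = ∑_{k=0}^{⌊n/2⌋} (−1)^k m_k(T) t^{n − 2k}`,
where `m k` counts the matchings of `T` with exactly `k` edges. -/
theorem charpoly_tree_eq_matching_polynomial {V : Type*} [Fintype V] [DecidableEq V]
    (T : SimpleGraph V) [DecidableRel T.Adj] (hT : T.IsTree)
    (m : ℕ → ℕ)
    (hm : ∀ k, m k = Set.ncard {s : Finset (Sym2 V) |
      ↑s ⊆ T.edgeSet ∧ s.card = k ∧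
        (s : Set (Sym2 V)).Pairwise fun e f => ∀ v : V, v ∈ e → v ∉ f}) :
    (T.adjMatrix ℝ).charpoly =
      ∑ k ∈ Finset.range (Fintype.card V / 2 + 1),
        Polynomial.C ((-1 : ℝ) ^ k * (m k : ℝ)) *
          Polynomial.X ^ (Fintype.card V - 2 * k) := by
  classical
  set n := Fintype.card V with hn
  set A := T.adjMatrix ℝ with hA
  rw [Matrix.charpoly, Matrix.det_apply']
  set P : Equiv.Perm V → Prop := fun σ => ∀ i, σ i ≠ i → T.Adj (σ i) i with hP
  rw [← Finset.sum_filter_add_sum_filter_not Finset.univ P]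
  have hbad : ∑ σ ∈ Finset.univ.filter (fun σ => ¬ P σ),
      (((Equiv.Perm.sign σ : ℤ) : Polynomial ℝ) * ∏ i, (Matrix.charmatrix A) (σ i) i) = 0 := by
    refine Finset.sum_eq_zero ?_
    intro σ hσ
    simp only [Finset.mem_filter, hP] at hσ
    push_neg at hσ
    obtain ⟨i, hi, hnadj⟩ := hσ.2
    have hzero : (Matrix.charmatrix A) (σ i) i = 0 := by
      rw [Matrix.charmatrix_apply_ne _ _ _ hi, hA, SimpleGraph.adjMatrix_apply,
        if_neg hnadj]
      simp
    exact mul_eq_zero_of_right _ (Finset.prod_eq_zero (Finset.mem_univ i) hzero)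
  rw [hbad, add_zero]
  set 𝓜 : Finset (Finset (Sym2 V)) := Finset.univ.filter (fun s => IsMatching' T s) with h𝓜
  -- each good term
  have hterm : ∀ σ ∈ Finset.univ.filter P,
      (((Equiv.Perm.sign σ : ℤ) : Polynomial ℝ) * ∏ i, (Matrix.charmatrix A) (σ i) i)
        = (-1 : Polynomial ℝ) ^ (Mof σ).card
            * Polynomial.X ^ (n - 2 * (Mof σ).card) := by
    intro σ hσ
    simp only [Finset.mem_filter, hP, Finset.mem_univ, true_and] at hσ
    have hadj := hσ
    have hinv : ∀ v, σ (σ v) = v := perm_sq_eq_one_of_acyclic hT.IsAcyclic σ hadj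
    obtain ⟨hsign, -⟩ := sign_invol hinv
    have hcs : σ.support.card = 2 * (Mof σ).card := card_support_eq hinv
    have hprod : (∏ i, (Matrix.charmatrix A) (σ i) i) = Polynomial.X ^ (n - 2 * (Mof σ).card) := by
      rw [← Finset.prod_mul_prod_compl σ.support]
      have h1 : ∀ i ∈ σ.support, (Matrix.charmatrix A) (σ i) i = -1 := by
        intro i hi
        have hne : σ i ≠ i := Equiv.Perm.mem_support.mp hi
        rw [Matrix.charmatrix_apply_ne _ _ _ hne, hA, SimpleGraph.adjMatrix_apply,
          if_pos (hadj i hne)]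
        simp
      have h2 : ∀ i ∈ σ.supportᶜ, (Matrix.charmatrix A) (σ i) i = Polynomial.X := by
        intro i hi
        have heq : σ i = i := by
          have := Finset.mem_compl.mp hi
          exact Equiv.Perm.notMem_support.mp this
        rw [heq, Matrix.charmatrix_apply_eq, hA, SimpleGraph.adjMatrix_apply,
          if_neg (T.loopless.irrefl i)]
        simp
      rw [Finset.prod_congr rfl h1, Finset.prod_congr rfl h2, Finset.prod_const,
        Finset.prod_const, Finset.card_compl, hcs]
      have : (-1 : Polynomial ℝ) ^ (2 * (Mof σ).card) = 1 := by
        rw [pow_mul]; norm_num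
      rw [this, one_mul, hn]
    rw [hprod, hsign]
    congr 1
    push_cast
    norm_num
  rw [Finset.sum_congr rfl hterm]
  -- reindex over matchings
  have hreindex : ∑ σ ∈ Finset.univ.filter P,
      ((-1 : Polynomial ℝ) ^ (Mof σ).card * Polynomial.X ^ (n - 2 * (Mof σ).card))
      = ∑ s ∈ 𝓜, ((-1 : Polynomial ℝ) ^ s.card * Polynomial.X ^ (n - 2 * s.card)) := by
    refine Finset.sum_nbij' (i := Mof) (j := matchPerm T) ?_ ?_ ?_ ?_ ?_
    · intro σ hσ
      simp only [Finset.mem_filter, hP, Finset.mem_univ, true_and] at hσ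
      have hinv := perm_sq_eq_one_of_acyclic hT.IsAcyclic σ hσ
      rw [h𝓜, Finset.mem_filter]
      exact ⟨Finset.mem_univ _, Mof_isMatching hσ hinv⟩
    · intro s hs
      rw [h𝓜, Finset.mem_filter] at hs
      simp only [Finset.mem_filter, hP]
      exact ⟨Finset.mem_univ _, matchPerm_adj hs.2⟩
    · intro σ hσ
      simp only [Finset.mem_filter, hP, Finset.mem_univ, true_and] at hσ
      have hinv := perm_sq_eq_one_of_acyclic hT.IsAcyclic σ hσ
      exact matchPerm_Mof hσ hinv
    · intro s hs
      rw [h𝓜, Finset.mem_filter] at hs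
      exact Mof_matchPerm hs.2
    · intro σ hσ
      rfl
  rw [hreindex]
  -- group by cardinality
  have hmaps : ∀ s ∈ 𝓜, s.card ∈ Finset.range (n / 2 + 1) := by
    intro s hs
    rw [h𝓜, Finset.mem_filter] at hs
    have hadj := matchPerm_adj hs.2
    have hinv := perm_sq_eq_one_of_acyclic hT.IsAcyclic _ hadj
    have h1 : (matchPerm T s).support.card = 2 * (Mof (matchPerm T s)).card :=
      card_support_eq hinv
    rw [Mof_matchPerm hs.2] at h1
    have h2 : (matchPerm T s).support.card ≤ n := Finset.card_le_univ _
    rw [Finset.mem_range]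
    omega
  rw [← Finset.sum_fiberwise_of_maps_to hmaps
    (fun s => (-1 : Polynomial ℝ) ^ s.card * Polynomial.X ^ (n - 2 * s.card))]
  refine Finset.sum_congr rfl ?_
  intro k hk
  have hinner : ∑ s ∈ 𝓜.filter (fun s => s.card = k),
      ((-1 : Polynomial ℝ) ^ s.card * Polynomial.X ^ (n - 2 * s.card))
      = (𝓜.filter (fun s => s.card = k)).card
          • ((-1 : Polynomial ℝ) ^ k * Polynomial.X ^ (n - 2 * k)) := by
    rw [← Finset.sum_const]
    refine Finset.sum_congr rfl ?_
    intro s hs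
    rw [Finset.mem_filter] at hs
    rw [hs.2]
  rw [hinner]
  have hmk : m k = (𝓜.filter (fun s => s.card = k)).card := by
    rw [hm k, ← Set.ncard_coe_finset]
    congr 1
    ext s
    simp only [Finset.coe_filter, h𝓜, Finset.mem_filter, Finset.mem_univ, true_and]
    simp only [Finset.coe_filter, Set.mem_setOf_eq, h𝓜, Finset.mem_filter, Finset.mem_univ,
      true_and, IsMatching']
    tauto
  rw [hmk]
  rw [nsmul_eq_mul]
  rw [map_mul, map_pow, map_neg, map_one, Polynomial.C_eq_natCast]
  ring
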